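/- Let φ : {1,2,3,…} → (0,∞) be increasing, convex and normalized, and let m < n be positive integers. If N(φ,n) = (K(φ,n))^ (i.e. φ is n-separating), then N(φ,m) = (K(φ,m))^ (i.e. φ is m-separating). -/

import Mathlib

/-- Membership in `Ṽ`: a nonincreasing, finitely supported sequence
of nonnegative integers. -/
def IsVt (v : ℕ → ℕ) : Prop :=
  (∀ i j, i ≤ j → v j ≤ v i) ∧ ∃ s, ∀ i, s ≤ i → v i = 0

/-- The extension of `φ : {1,2,…} → ℝ` to `Ṽ`: `φ(v) = Σ_{i : v_i > 0} φ(v_i)`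
(a finite sum since `v` is finitely supported). -/
noncomputable def phiV (phi : ℕ → ℝ) (v : ℕ → ℕ) : ℝ :=
  ∑ᶠ (i : ℕ) (_ : v i ≠ 0), phi (v i)

/-- `K(φ,n) = {v ∈ Ṽ : φ(v) = n}`. -/
def Kset (phi : ℕ → ℝ) (n : ℕ) : Set (ℕ → ℕ) :=
  {v | IsVt v ∧ phiV phi v = n}

/-- `N(φ,n)`: the set of minimal elements of `{v ∈ Ṽ : φ(v) > n}` for the
coordinatewise partial order. -/
def Nset (phi : ℕ → ℝ) (n : ℕ) : Set (ℕ → ℕ) :=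
  {w | (IsVt w ∧ phiV phi w > n) ∧
    ∀ v : ℕ → ℕ, IsVt v → phiV phi v > n → (∀ i, v i ≤ w i) → v = w}

/-- `v̂`: the sequence `v` with its first (largest) entry increased by 1. -/
def vhat (v : ℕ → ℕ) : ℕ → ℕ := fun i => if i = 0 then v 0 + 1 else v i

/-- `ω(v)`: the width of `v`, the number of its nonzero entries. -/
noncomputable def width (v : ℕ → ℕ) : ℕ := Set.ncard {i | v i ≠ 0}

/-- `(1^r)`: the sequence consisting of `r` entries equal to `1`. -/
def onesV (r : ℕ) : ℕ → ℕ := fun i => if i < r then 1 else 0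

/-- `X̂ = {x̂ : x ∈ X} ∪ {(1^{ω(X)+1})}`, where `ω(X) = max_{x ∈ X} ω(x)`
(realized as `sSup (width '' X)`, which is the maximum for `X` finite nonempty). -/
noncomputable def hatSet (X : Set (ℕ → ℕ)) : Set (ℕ → ℕ) :=
  (vhat '' X) ∪ {onesV (sSup (width '' X) + 1)}

/-! ### auxiliary -/

noncomputable def Tm (phi : ℕ → ℝ) (x : ℕ) : ℝ := if x = 0 then 0 else phi x

noncomputable def Sm (phi : ℕ → ℝ) (v : ℕ → ℕ) (s : ℕ) : ℝ :=
  ∑ i ∈ Finset.range s, Tm phi (v i)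

lemma phiV_eq_Sm (phi : ℕ → ℝ) (v : ℕ → ℕ) (s : ℕ) (hs : ∀ i, s ≤ i → v i = 0) :
    phiV phi v = Sm phi v s := by
  have h1 : phiV phi v = ∑ᶠ i, Tm phi (v i) := by
    unfold phiV Tm
    congr 1; funext i
    rw [finsum_eq_if]
    by_cases h : v i = 0 <;> simp [h]
  rw [h1]
  apply finsum_eq_finset_sum_of_support_subset
  intro i hi
  simp only [Function.mem_support] at hi
  simp only [Finset.coe_range, Set.mem_Iio]
  by_contra h
  push_neg at h
  rw [hs i h] at hi
  simp [Tm] at hi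

section Phi
variable {phi : ℕ → ℝ}
variable (hpos : ∀ m : ℕ, 1 ≤ m → 0 < phi m)
variable (hmono : ∀ m n : ℕ, 1 ≤ m → m < n → phi m < phi n)
variable (hconv : ∀ m n : ℕ, 1 ≤ m → m < n → phi (n + 1) - phi n < phi (m + 1) - phi m)
variable (hnorm : phi 1 = 1)

include hmono in
lemma phi_mono' {a b : ℕ} (ha : 1 ≤ a) (hab : a ≤ b) : phi a ≤ phi b := by
  rcases eq_or_lt_of_le hab with h | h
  · rw [h]
  · exact le_of_lt (hmono a b ha h)

include hconv in
lemma dstep {a b : ℕ} (ha : 1 ≤ a) (hab : a ≤ b) :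
    phi (b + 1) - phi b ≤ phi (a + 1) - phi a := by
  rcases eq_or_lt_of_le hab with h | h
  · rw [h]
  · exact le_of_lt (hconv a b ha h)

include hpos in
lemma Tm_nonneg (x : ℕ) : 0 ≤ Tm phi x := by
  unfold Tm
  split_ifs with h
  · exact le_refl _
  · exact le_of_lt (hpos x (Nat.one_le_iff_ne_zero.mpr h))

include hpos hmono in
lemma phiV_mono {u w : ℕ → ℕ} {s : ℕ} (hu : ∀ i, u i ≤ w i)
    (hs : ∀ i, s ≤ i → w i = 0) : phiV phi u ≤ phiV phi w := by
  have hsu : ∀ i, s ≤ i → u i = 0 := fun i hi =>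
    Nat.le_zero.mp ((hs i hi) ▸ hu i)
  rw [phiV_eq_Sm phi u s hsu, phiV_eq_Sm phi w s hs]
  apply Finset.sum_le_sum
  intro i _
  unfold Tm
  by_cases h1 : u i = 0
  · rw [if_pos h1]
    exact Tm_nonneg hpos (w i) |>.trans_eq (by unfold Tm; rfl) |>.trans_eq rfl
  · have h2 : w i ≠ 0 := fun h => h1 (Nat.le_zero.mp (h ▸ hu i))
    rw [if_neg h1, if_neg h2]
    exact phi_mono' hmono (Nat.one_le_iff_ne_zero.mpr h1) (hu i)
end Phi

lemma Sm_update (phi : ℕ → ℝ) (w : ℕ → ℕ) (j b s : ℕ) (hj : j < s) :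
    Sm phi (Function.update w j b) s = Sm phi w s - Tm phi (w j) + Tm phi b := by
  unfold Sm
  have hmem : j ∈ Finset.range s := Finset.mem_range.mpr hj
  have h1 : ∀ i ∈ Finset.range s,
      Tm phi (Function.update w j b i) = Function.update (fun i => Tm phi (w i)) j (Tm phi b) i := by
    intro i _
    by_cases h : i = j
    · subst h; simp
    · simp [Function.update_of_ne h]
  rw [Finset.sum_congr rfl h1, Finset.sum_update_of_mem hmem]
  rw [Finset.sum_eq_sum_sdiff_singleton_add hmem (fun i => Tm phi (w i))]
  ring

lemma phiV_update (phi : ℕ → ℝ) (w : ℕ → ℕ) (j b s : ℕ) (hj : j < s)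
    (hs : ∀ i, s ≤ i → w i = 0) :
    phiV phi (Function.update w j b) = phiV phi w - Tm phi (w j) + Tm phi b := by
  have hs' : ∀ i, s ≤ i → Function.update w j b i = 0 := by
    intro i hi
    rw [Function.update_of_ne (by omega : i ≠ j)]
    exact hs i hi
  rw [phiV_eq_Sm phi _ s hs', phiV_eq_Sm phi w s hs, Sm_update phi w j b s hj]

lemma isVt_onesV (r : ℕ) : IsVt (onesV r) := by
  constructor
  · intro i j hij
    unfold onesV
    split_ifs <;> omega
  · exact ⟨r, fun i hi => by unfold onesV; simp [Nat.not_lt.mpr hi]⟩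

lemma phiV_onesV (phi : ℕ → ℝ) (hnorm : phi 1 = 1) (r : ℕ) :
    phiV phi (onesV r) = r := by
  rw [phiV_eq_Sm phi _ r (fun i hi => by unfold onesV; simp [Nat.not_lt.mpr hi])]
  unfold Sm Tm onesV
  rw [Finset.sum_congr rfl (fun i hi => by
    rw [Finset.mem_range] at hi
    simp [hi, hnorm] : ∀ i ∈ Finset.range r, _ = (1:ℝ))]
  simp

lemma width_onesV (r : ℕ) : width (onesV r) = r := by
  unfold width onesV
  have : {i | (if i < r then 1 else 0) ≠ 0} = Set.Iio r := by
    ext i; simp only [Set.mem_setOf_eq, Set.mem_Iio]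
    split_ifs with h <;> simp [h]
  rw [this, ← Finset.coe_range, Set.ncard_coe_finset, Finset.card_range]

lemma isVt_vhat {v : ℕ → ℕ} (hv : IsVt v) : IsVt (vhat v) := by
  obtain ⟨hd, s, hs⟩ := hv
  constructor
  · intro i j hij
    unfold vhat
    by_cases h1 : j = 0 <;> by_cases h2 : i = 0
    · rw [if_pos h1, if_pos h2]
    · omega
    · rw [if_neg h1, if_pos h2]
      exact le_trans (hd 0 j (Nat.zero_le j)) (Nat.le_succ _)
    · rw [if_neg h1, if_neg h2]
      exact hd i j hij
  · refine ⟨s + 1, fun i hi => ?_⟩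
    unfold vhat
    rw [if_neg (by omega : i ≠ 0)]
    exact hs i (by omega)

lemma vhat_eq_update (v : ℕ → ℕ) : vhat v = Function.update v 0 (v 0 + 1) := by
  funext i
  unfold vhat
  by_cases h : i = 0
  · subst h; simp
  · rw [if_neg h, Function.update_of_ne h]

lemma phiV_vhat (phi : ℕ → ℝ) {v : ℕ → ℕ} {s : ℕ} (hs : ∀ i, s ≤ i → v i = 0)
    (hv0 : v 0 ≠ 0) :
    phiV phi (vhat v) = phiV phi v + (phi (v 0 + 1) - phi (v 0)) := by
  have hs' : 0 < s := by
    by_contra h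
    exact hv0 (hs 0 (by omega))
  rw [vhat_eq_update, phiV_update phi v 0 (v 0 + 1) s hs' hs]
  unfold Tm
  rw [if_neg hv0, if_neg (by omega : v 0 + 1 ≠ 0)]
  ring

lemma v0_ne_zero {phi : ℕ → ℝ} {v : ℕ → ℕ} (hv : IsVt v) (h : 0 < phiV phi v) :
    v 0 ≠ 0 := by
  intro h0
  obtain ⟨hd, s, hs⟩ := hv
  have : ∀ i, (0:ℕ) ≤ i → v i = 0 := fun i _ => Nat.le_zero.mp (h0 ▸ hd 0 i (Nat.zero_le i))
  rw [phiV_eq_Sm phi v 0 this] at h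
  unfold Sm at h
  simp at h

section Phi2
variable {phi : ℕ → ℝ}
variable (hpos : ∀ m : ℕ, 1 ≤ m → 0 < phi m)
variable (hmono : ∀ m n : ℕ, 1 ≤ m → m < n → phi m < phi n)
variable (hconv : ∀ m n : ℕ, 1 ≤ m → m < n → phi (n + 1) - phi n < phi (m + 1) - phi m)
variable (hnorm : phi 1 = 1)

include hmono hnorm in
lemma width_le_phiV {v : ℕ → ℕ} {s : ℕ} (hs : ∀ i, s ≤ i → v i = 0) :
    (width v : ℝ) ≤ phiV phi v := by
  have hset : {i | v i ≠ 0} = ↑((Finset.range s).filter (fun i => v i ≠ 0)) := by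
    ext i
    simp only [Set.mem_setOf_eq, Finset.coe_filter, Finset.mem_range, Set.mem_setOf_eq]
    constructor
    · intro h; exact ⟨by by_contra hh; exact h (hs i (by omega)), h⟩
    · intro h; exact h.2
  rw [phiV_eq_Sm phi v s hs]
  unfold width
  rw [hset, Set.ncard_coe_finset]
  rw [Finset.card_filter]
  push_cast
  unfold Sm
  apply Finset.sum_le_sum
  intro i _
  unfold Tm
  by_cases h : v i = 0
  · simp [h]
  · rw [if_neg h, if_pos h]
    calc (1:ℝ) = phi 1 := hnorm.symm
    _ ≤ phi (v i) := phi_mono' hmono le_rfl (Nat.one_le_iff_ne_zero.mpr h)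

include hmono hnorm in
lemma sSup_width_K (k : ℕ) : sSup (width '' Kset phi k) = k := by
  have hmem : (k : ℕ) ∈ width '' Kset phi k := by
    refine ⟨onesV k, ⟨isVt_onesV k, phiV_onesV phi hnorm k⟩, width_onesV k⟩
  have hbdd : ∀ x ∈ width '' Kset phi k, x ≤ k := by
    rintro x ⟨v, ⟨⟨hd, s, hs⟩, hphi⟩, rfl⟩
    have := width_le_phiV hmono hnorm (phi := phi) hs
    rw [hphi] at this
    exact_mod_cast this
  exact le_antisymm (csSup_le ⟨k, hmem⟩ hbdd) (le_csSup ⟨k, hbdd⟩ hmem)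

include hpos hmono hconv hnorm in
lemma min_step (hd1 : phi 2 - phi 1 ≤ 1) {w u : ℕ → ℕ} {s : ℕ}
    (hw : IsVt w) (hs : ∀ i, s ≤ i → w i = 0) (hw0 : 2 ≤ w 0)
    (hu : ∀ i, u i ≤ w i) (hne : u ≠ w) :
    phiV phi u ≤ phiV phi w - (phi (w 0) - phi (w 0 - 1)) := by
  have hex : ∃ j, u j < w j := by
    by_contra h
    push_neg at h
    exact hne (funext fun i => le_antisymm (hu i) (h i))
  obtain ⟨j, hj⟩ := hex
  have hwj : w j ≠ 0 := by omega
  have hjs : j < s := by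
    by_contra h
    rw [hs j (by omega)] at hj; omega
  have hle : phiV phi u ≤ phiV phi (Function.update w j (w j - 1)) := by
    apply phiV_mono hpos hmono (s := s)
    · intro i
      by_cases h : i = j
      · subst h; rw [Function.update_self]; omega
      · rw [Function.update_of_ne h]; exact hu i
    · intro i hi
      rw [Function.update_of_ne (by omega : i ≠ j)]
      exact hs i hi
  rw [phiV_update phi w j (w j - 1) s hjs hs] at hle
  refine hle.trans ?_
  have hcost : phi (w 0) - phi (w 0 - 1) ≤ Tm phi (w j) - Tm phi (w j - 1) := by
    have hwj0 : w j ≤ w 0 := hw.1 0 j (Nat.zero_le j)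
    by_cases h1 : w j = 1
    · have ht : Tm phi (w j) - Tm phi (w j - 1) = 1 := by
        rw [h1]; simp [Tm, hnorm]
      rw [ht]
      rcases Nat.lt_or_ge (w 0) 3 with h | h
      · have h2 : w 0 = 2 := by omega
        have e : (2:ℕ) - 1 = 1 := rfl
        rw [h2, e, hnorm] at *
        linarith
      · have h2 : phi (w 0) - phi (w 0 - 1) ≤ phi 2 - phi 1 := by
          have := dstep hconv (a := 1) (b := w 0 - 1) le_rfl (by omega)
          have he : w 0 - 1 + 1 = w 0 := by omega
          rwa [he] at this
        linarith
    · have ht1 : Tm phi (w j) = phi (w j) := if_neg hwj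
      have ht2 : Tm phi (w j - 1) = phi (w j - 1) := if_neg (by omega : w j - 1 ≠ 0)
      rw [ht1, ht2]
      have := dstep hconv (a := w j - 1) (b := w 0 - 1) (by omega) (by omega)
      have he1 : w j - 1 + 1 = w j := by omega
      have he2 : w 0 - 1 + 1 = w 0 := by omega
      rw [he1, he2] at this
      exact this
  linarith
end Phi2

section Main
variable {phi : ℕ → ℝ}
variable (hpos : ∀ m : ℕ, 1 ≤ m → 0 < phi m)
variable (hmono : ∀ m n : ℕ, 1 ≤ m → m < n → phi m < phi n)
variable (hconv : ∀ m n : ℕ, 1 ≤ m → m < n → phi (n + 1) - phi n < phi (m + 1) - phi m)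
variable (hnorm : phi 1 = 1)

include hnorm in
lemma delta1_le (n : ℕ) (hn : 2 ≤ n) (hsep : Nset phi n = hatSet (Kset phi n)) :
    phi 2 - phi 1 ≤ 1 := by
  by_contra hc
  push_neg at hc
  set v := onesV n with hv
  have hvK : v ∈ Kset phi n := ⟨isVt_onesV n, phiV_onesV phi hnorm n⟩
  have hwhat : vhat v ∈ hatSet (Kset phi n) := Or.inl ⟨v, hvK, rfl⟩
  rw [← hsep] at hwhat
  obtain ⟨⟨hwVt, hwgt⟩, hwmin⟩ := hwhat
  set w := vhat v with hwdef
  have hsv : ∀ i, n ≤ i → v i = 0 := fun i hi => by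
    simp [hv, onesV, Nat.not_lt.mpr hi]
  have hv0 : v 0 = 1 := by simp [hv, onesV]; omega
  have hphiw : phiV phi w = n + (phi 2 - phi 1) := by
    rw [hwdef, phiV_vhat phi hsv (by omega), hvK.2, hv0]
  have hsw : ∀ i, n ≤ i → w i = 0 := by
    intro i hi
    rw [hwdef]
    unfold vhat
    rw [if_neg (by omega : i ≠ 0)]
    exact hsv i hi
  set u := Function.update w (n-1) 0 with hu
  have hwn1 : w (n-1) = 1 := by
    rw [hwdef]
    unfold vhat
    rw [if_neg (by omega : n - 1 ≠ 0)]
    simp [hv, onesV]; omega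
  have hphiu : phiV phi u = phiV phi w - phi 1 := by
    rw [hu, phiV_update phi w (n-1) 0 n (by omega) hsw, hwn1]
    simp [Tm]
  have huVt : IsVt u := by
    constructor
    · intro i j hij
      rw [hu]
      by_cases h1 : j = n - 1
      · subst h1; simp
      · rw [Function.update_of_ne h1]
        by_cases h2 : i = n - 1
        · subst h2
          rw [Function.update_self]
          have : n ≤ j := by omega
          rw [hsw j this]
        · rw [Function.update_of_ne h2]
          exact hwVt.1 i j hij
    · refine ⟨n, fun i hi => ?_⟩
      rw [hu, Function.update_of_ne (by omega : i ≠ n - 1)]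
      exact hsw i hi
  have hugt : phiV phi u > n := by
    rw [hphiu, hphiw, hnorm]; linarith
  have hule : ∀ i, u i ≤ w i := by
    intro i
    rw [hu]
    by_cases h : i = n - 1
    · subst h; simp
    · rw [Function.update_of_ne h]
  have := hwmin u huVt hugt hule
  have h2 := congrFun this (n-1)
  rw [hu, Function.update_self] at h2
  rw [hwn1] at h2
  exact one_ne_zero h2.symm

include hpos hmono hconv hnorm in
lemma vhat_mem_Nset (hd1 : phi 2 - phi 1 ≤ 1) (m : ℕ) (hm : 1 ≤ m)
    {v : ℕ → ℕ} (hvK : v ∈ Kset phi m) : vhat v ∈ Nset phi m := by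
  obtain ⟨hvVt, hvphi⟩ := hvK
  have hv0 : v 0 ≠ 0 := by
    apply v0_ne_zero hvVt
    rw [hvphi]
    have : (1:ℝ) ≤ m := by exact_mod_cast hm
    linarith
  obtain ⟨s, hs⟩ := hvVt.2
  have hphiw : phiV phi (vhat v) = m + (phi (v 0 + 1) - phi (v 0)) := by
    rw [phiV_vhat phi hs hv0, hvphi]
  have hdelta : 0 < phi (v 0 + 1) - phi (v 0) := by
    have := hmono (v 0) (v 0 + 1) (by omega) (by omega)
    linarith
  have hwVt := isVt_vhat hvVt
  refine ⟨⟨hwVt, by rw [hphiw]; linarith⟩, ?_⟩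
  intro u huVt hugt hule
  by_contra hne
  obtain ⟨s', hs'⟩ := hwVt.2
  have hkey := min_step hpos hmono hconv hnorm hd1 hwVt hs'
    (by show 2 ≤ vhat v 0; unfold vhat; simp; omega) hule hne
  have he1 : vhat v 0 = v 0 + 1 := by unfold vhat; simp
  rw [he1] at hkey
  simp only [Nat.add_sub_cancel] at hkey
  rw [hphiw] at hkey
  linarith

include hnorm in
lemma onesV_mem_Nset (m : ℕ) : onesV (m+1) ∈ Nset phi m := by
  have hphi : phiV phi (onesV (m+1)) = (m+1 : ℕ) := phiV_onesV phi hnorm (m+1)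
  refine ⟨⟨isVt_onesV (m+1), by rw [hphi]; push_cast; linarith⟩, ?_⟩
  intro u huVt hugt hule
  have hub : ∀ i, u i ≤ onesV (m+1) i := hule
  have hu1 : ∀ i, u i ≤ 1 := by
    intro i
    refine (hub i).trans ?_
    unfold onesV
    split_ifs <;> omega
  have husup : ∀ i, m + 1 ≤ i → u i = 0 := by
    intro i hi
    have := hub i
    unfold onesV at this
    rw [if_neg (by omega)] at this
    omega
  have hall : ∀ j, j < m + 1 → u j = 1 := by
    by_contra hcon
    push_neg at hcon
    obtain ⟨j, hj, hj1⟩ := hcon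
    have huj : u j = 0 := by have := hu1 j; omega
    have hbound : phiV phi u ≤ (m : ℝ) := by
      rw [phiV_eq_Sm phi u (m+1) husup]
      unfold Sm
      have hterm : ∀ i ∈ Finset.range (m+1),
          Tm phi (u i) ≤ (if i = j then (0:ℝ) else 1) := by
        intro i _
        by_cases h : i = j
        · subst h
          rw [if_pos rfl, huj]
          simp [Tm]
        · rw [if_neg h]
          unfold Tm
          rcases Nat.le_one_iff_eq_zero_or_eq_one.mp (hu1 i) with h0 | h1
          · simp [h0]
          · rw [h1, if_neg one_ne_zero, hnorm]
      calc ∑ i ∈ Finset.range (m+1), Tm phi (u i)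
          ≤ ∑ i ∈ Finset.range (m+1), (if i = j then (0:ℝ) else 1) :=
            Finset.sum_le_sum hterm
        _ = ∑ i ∈ Finset.range (m+1), ((1:ℝ) - (if i = j then 1 else 0)) := by
            apply Finset.sum_congr rfl
            intro i _
            split_ifs <;> ring
        _ = (m+1 : ℝ) - 1 := by
            rw [Finset.sum_sub_distrib, Finset.sum_const, Finset.sum_ite_eq'
              (Finset.range (m+1)) j (fun _ => (1:ℝ))]
            rw [if_pos (Finset.mem_range.mpr hj)]
            simp
        _ = (m : ℝ) := by ring
    linarith
  funext i
  by_cases h : i < m + 1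
  · rw [hall i h]
    unfold onesV
    rw [if_pos h]
  · rw [husup i (by omega)]
    unfold onesV
    rw [if_neg h]
end Main


/-- Let `φ : {1,2,3,…} → (0,∞)` be increasing, convex and
normalized, and let `1 ≤ m < n`.  If `φ` is `n`-separating, i.e.
`N(φ,n) = (K(φ,n))^`, then `φ` is `m`-separating, i.e. `N(φ,m) = (K(φ,m))^`. -/
theorem separating_of_separating_lt (phi : ℕ → ℝ)
    (hpos : ∀ m : ℕ, 1 ≤ m → 0 < phi m)
    (hmono : ∀ m n : ℕ, 1 ≤ m → m < n → phi m < phi n)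
    (hconv : ∀ m n : ℕ, 1 ≤ m → m < n → phi (n + 1) - phi n < phi (m + 1) - phi m)
    (hnorm : phi 1 = 1)
    (m n : ℕ) (hm : 1 ≤ m) (hmn : m < n)
    (hsep : Nset phi n = hatSet (Kset phi n)) :
    Nset phi m = hatSet (Kset phi m) := by
  have hn2 : 2 ≤ n := by omega
  have hd1 : phi 2 - phi 1 ≤ 1 := delta1_le hnorm n hn2 hsep
  have hsupK : sSup (width '' Kset phi m) = m := sSup_width_K hmono hnorm m
  ext w
  constructor
  · -- Nset ⊆ hatSet
    rintro ⟨⟨hwVt, hwgt⟩, hwmin⟩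
    have hm1 : (1:ℝ) ≤ m := by exact_mod_cast hm
    have hw0 : w 0 ≠ 0 := v0_ne_zero hwVt (by linarith)
    obtain ⟨hdW, s0, hs0⟩ := hwVt
    have hex : ∃ i, w i = 0 := ⟨s0, hs0 s0 le_rfl⟩
    set t := Nat.find hex with htdef
    have htz : w t = 0 := Nat.find_spec hex
    have htmin : ∀ i, i < t → w i ≠ 0 := fun i hi => Nat.find_min hex hi
    have hzero : ∀ i, t ≤ i → w i = 0 := fun i hi => Nat.le_zero.mp (htz ▸ hdW t i hi)
    have ht1 : 1 ≤ t := by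
      by_contra h
      exact hw0 (hzero 0 (by omega))
    by_cases hcase : w 0 = 1
    · -- w is a sequence of ones
      have hwones : w = onesV t := by
        funext i
        unfold onesV
        by_cases h : i < t
        · have h1 := htmin i h
          have h2 : w i ≤ 1 := hcase ▸ hdW 0 i (Nat.zero_le i)
          rw [if_pos h]; omega
        · rw [if_neg h]; exact hzero i (by omega)
      have hphiw : phiV phi w = t := by rw [hwones]; exact phiV_onesV phi hnorm t
      have htm : m + 1 ≤ t := by
        by_contra h
        have : (t : ℝ) ≤ m := by exact_mod_cast (by omega : t ≤ m)
        rw [hphiw] at hwgt; linarith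
      have hle : ∀ i, onesV (m+1) i ≤ w i := by
        intro i
        rw [hwones]
        unfold onesV
        split_ifs with h1 h2 <;> omega
      have heq := hwmin (onesV (m+1)) (isVt_onesV (m+1))
        (by rw [phiV_onesV phi hnorm (m+1)]; push_cast; linarith) hle
      right
      rw [Set.mem_singleton_iff, hsupK, ← heq]
    · -- w 0 ≥ 2
      have hw02 : 2 ≤ w 0 := by omega
      -- Step 1: phiV w ≤ m + (phi (w 0) - phi (w 0 - 1))
      have hex2 : ∃ p, w p < w 0 := ⟨t, by omega⟩
      set p := Nat.find hex2 with hpdef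
      have hp : w p < w 0 := Nat.find_spec hex2
      have hp1 : 1 ≤ p := by
        by_contra h
        have : p = 0 := by omega
        rw [this] at hp; omega
      have hpe : w (p-1) = w 0 := by
        have h1 : ¬ w (p-1) < w 0 := Nat.find_min hex2 (by omega)
        have h2 : w (p-1) ≤ w 0 := hdW 0 (p-1) (Nat.zero_le _)
        omega
      have hpt : p - 1 < t := by
        by_contra h
        rw [hzero (p-1) (by omega)] at hpe; omega
      set u₀ := Function.update w (p-1) (w 0 - 1) with hu₀
      have hu₀Vt : IsVt u₀ := by
        constructor
        · intro i j hij
          rw [hu₀]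
          by_cases h1 : j = p - 1
          · subst h1
            rw [Function.update_self]
            by_cases h2 : i = p - 1
            · subst h2; rw [Function.update_self]
            · rw [Function.update_of_ne h2]
              have : w 0 ≤ w i := hpe ▸ hdW i (p-1) hij
              omega
          · rw [Function.update_of_ne h1]
            by_cases h2 : i = p - 1
            · subst h2
              rw [Function.update_self]
              have hjp : p ≤ j := by omega
              have : w j ≤ w p := hdW p j hjp
              omega
            · rw [Function.update_of_ne h2]
              exact hdW i j hij
        · refine ⟨t, fun i hi => ?_⟩
          rw [hu₀, Function.update_of_ne (by omega : i ≠ p - 1)]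
          exact hzero i hi
      have hu₀ne : u₀ ≠ w := by
        intro h
        have := congrFun h (p-1)
        rw [hu₀, Function.update_self, hpe] at this
        omega
      have hu₀le : ∀ i, u₀ i ≤ w i := by
        intro i
        rw [hu₀]
        by_cases h : i = p - 1
        · subst h; rw [Function.update_self, hpe]; omega
        · rw [Function.update_of_ne h]
      have hu₀phi : phiV phi u₀ = phiV phi w - phi (w 0) + phi (w 0 - 1) := by
        rw [hu₀, phiV_update phi w (p-1) (w 0 - 1) t hpt hzero, hpe]
        unfold Tm
        rw [if_neg (by omega : w 0 ≠ 0), if_neg (by omega : w 0 - 1 ≠ 0)]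
      have hstep1 : phiV phi w ≤ m + (phi (w 0) - phi (w 0 - 1)) := by
        by_contra h
        push_neg at h
        have hgt : phiV phi u₀ > (m : ℝ) := by rw [hu₀phi]; linarith
        exact hu₀ne (hwmin u₀ hu₀Vt hgt hu₀le)
      -- Build w'
      set k := n - m with hkdef
      have hk1 : 1 ≤ k := by omega
      set w' : ℕ → ℕ := fun i => if i < t then w i else if i < t + k then 1 else 0 with hw'
      have hw'eq : ∀ i, i < t → w' i = w i := fun i hi => by rw [hw']; simp [hi]
      have hw'0 : w' 0 = w 0 := hw'eq 0 (by omega)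
      have hw'one : ∀ i, t ≤ i → i < t + k → w' i = 1 := by
        intro i h1 h2
        rw [hw']
        simp only [if_neg (by omega : ¬ i < t), if_pos h2]
      have hw'z : ∀ i, t + k ≤ i → w' i = 0 := by
        intro i hi
        rw [hw']
        simp only [if_neg (by omega : ¬ i < t), if_neg (by omega : ¬ i < t + k)]
      have hw'Vt : IsVt w' := by
        constructor
        · intro i j hij
          rcases Nat.lt_or_ge j t with h1 | h1
          · rw [hw'eq j h1, hw'eq i (by omega)]
            exact hdW i j hij
          · rcases Nat.lt_or_ge j (t + k) with h2 | h2
            · rw [hw'one j h1 h2]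
              rcases Nat.lt_or_ge i t with h3 | h3
              · rw [hw'eq i h3]
                have := htmin i h3; omega
              · rw [hw'one i h3 (by omega)]
            · rw [hw'z j h2]; omega
        · exact ⟨t + k, hw'z⟩
      have hphiw' : phiV phi w' = phiV phi w + k := by
        rw [phiV_eq_Sm phi w' (t+k) hw'z, phiV_eq_Sm phi w t hzero]
        unfold Sm
        rw [Finset.range_eq_Ico,
          ← Finset.sum_Ico_consecutive _ (Nat.zero_le t) (Nat.le_add_right t k)]
        have h1 : ∑ i ∈ Finset.Ico 0 t, Tm phi (w' i) = ∑ i ∈ Finset.Ico 0 t, Tm phi (w i) := by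
          apply Finset.sum_congr rfl
          intro i hi
          rw [Finset.mem_Ico] at hi
          rw [hw'eq i hi.2]
        have h2 : ∑ i ∈ Finset.Ico t (t+k), Tm phi (w' i) = k := by
          have : ∀ i ∈ Finset.Ico t (t+k), Tm phi (w' i) = 1 := by
            intro i hi
            rw [Finset.mem_Ico] at hi
            rw [hw'one i hi.1 hi.2]
            unfold Tm
            rw [if_neg one_ne_zero, hnorm]
          rw [Finset.sum_congr rfl this, Finset.sum_const, Nat.card_Ico]
          simp
        rw [h1, h2, Finset.range_eq_Ico]
      have hkcast : (k : ℝ) = (n : ℝ) - m := by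
        rw [hkdef]; push_cast [Nat.cast_sub (le_of_lt hmn)]; ring
      have hw'gt : phiV phi w' > (n : ℝ) := by
        rw [hphiw', hkcast]; linarith
      have hw'N : w' ∈ Nset phi n := by
        refine ⟨⟨hw'Vt, hw'gt⟩, ?_⟩
        intro u huVt hugt hule
        by_contra hne
        have hkey := min_step hpos hmono hconv hnorm hd1 hw'Vt hw'z
          (by rw [hw'0]; omega) hule hne
        rw [hw'0, hphiw', hkcast] at hkey
        linarith
      rw [hsep] at hw'N
      rcases hw'N with ⟨v, hvK, hveq⟩ | hones
      · -- w' = vhat v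
        have hv0 : v 0 + 1 = w 0 := by
          have := congrFun hveq 0
          unfold vhat at this
          rw [if_pos rfl] at this
          rw [this, hw'0]
        obtain ⟨hvVt, hvphi⟩ := hvK
        obtain ⟨sv, hsv⟩ := hvVt.2
        have hphivhat : phiV phi (vhat v) = n + (phi (w 0) - phi (w 0 - 1)) := by
          rw [phiV_vhat phi hsv (by omega), hvphi, hv0]
          have : v 0 = w 0 - 1 := by omega
          rw [this]
        have hphiweq : phiV phi w = m + (phi (w 0) - phi (w 0 - 1)) := by
          rw [hveq, hphiw', hkcast] at hphivhat
          linarith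
        have hw1 : w 1 ≤ w 0 - 1 := by
          have hv1 : v 1 ≤ v 0 := hvVt.1 0 1 (by omega)
          have hweq1 : w' 1 = v 1 := by
            have := congrFun hveq 1
            unfold vhat at this
            rw [if_neg one_ne_zero] at this
            omega
          rcases Nat.lt_or_ge 1 t with h1 | h1
          · rw [hw'eq 1 h1] at hweq1; omega
          · have := hzero 1 h1; omega
        set z := Function.update w 0 (w 0 - 1) with hz
        have hzVt : IsVt z := by
          constructor
          · intro i j hij
            rw [hz]
            by_cases h1 : j = 0
            · subst h1
              have : i = 0 := by omega
              subst this
              exact le_rfl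
            · rw [Function.update_of_ne h1]
              by_cases h2 : i = 0
              · subst h2
                rw [Function.update_self]
                have : w j ≤ w 1 := hdW 1 j (by omega)
                omega
              · rw [Function.update_of_ne h2]
                exact hdW i j hij
          · refine ⟨t, fun i hi => ?_⟩
            rw [hz, Function.update_of_ne (by omega : i ≠ 0)]
            exact hzero i hi
        have hzphi : phiV phi z = (m : ℝ) := by
          rw [hz, phiV_update phi w 0 (w 0 - 1) t (by omega) hzero]
          unfold Tm
          rw [if_neg (by omega : w 0 ≠ 0), if_neg (by omega : w 0 - 1 ≠ 0)]
          rw [hphiweq]; ring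
        have hvhatz : vhat z = w := by
          funext i
          unfold vhat
          by_cases h : i = 0
          · subst h
            rw [if_pos rfl, hz, Function.update_self]
            omega
          · rw [if_neg h, hz, Function.update_of_ne h]
        exact Or.inl ⟨z, ⟨hzVt, hzphi⟩, hvhatz⟩
      · -- w' = onesV (...) : contradiction
        exfalso
        rw [Set.mem_singleton_iff] at hones
        have := congrFun hones 0
        rw [hw'0] at this
        unfold onesV at this
        split_ifs at this <;> omega
  · -- hatSet ⊆ Nset
    rintro (⟨v, hvK, rfl⟩ | hw)
    · exact vhat_mem_Nset hpos hmono hconv hnorm hd1 m hm hvK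
    · rw [Set.mem_singleton_iff, hsupK] at hw
      rw [hw]
      exact onesV_mem_Nset hnorm m
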